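/- The vector v = q^{−1/2} e_1⊗e_3 + e_2⊗e_2 + q^{1/2} e_3⊗e_1 in C^3 ⊗ C^3 lies in the kernel of the Izergin–Korepin R-matrix evaluated at x = −q^3: R(−q^3) v = 0. -/

import Mathlib

/-- The 9×9 Izergin–Korepin R-matrix `R(x)` of `U_q(A₂⁽²⁾)`, where `sq = q^{1/2}`
is a chosen square root of `q`. Rows/columns are indexed by `Fin 9`
(0-based; index `(i,j)`, `1 ≤ i,j ≤ 3`, corresponds to `3(i−1)+(j−1)`). -/
noncomputable def IKR {K : Type*} [Field K] (sq x : K) : Matrix (Fin 9) (Fin 9) K :=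
  let q : K := sq ^ 2
  let a : K := q * (x - 1) / (q ^ 2 * x - 1)
  let b : K := q ^ 2 * (q * x + 1) * (x - 1) / ((q ^ 2 * x - 1) * (q ^ 3 * x + 1))
  let c : K := q * (x - 1) / (q ^ 2 * x - 1) +
    (q ^ 2 - 1) * (q ^ 3 + 1) * x / ((q ^ 2 * x - 1) * (q ^ 3 * x + 1))
  let d : K := (q ^ 2 - 1) / (q ^ 2 * x - 1)
  let e : K := (q ^ 2 - 1) * (x - 1) * sq / ((q ^ 2 * x - 1) * (q ^ 3 * x + 1))
  let f : K := (q ^ 2 - 1) * x / (q ^ 2 * x - 1)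
  let g : K := (1 - q ^ 2) * x * (x - 1) * sq ^ 5 / ((q ^ 2 * x - 1) * (q ^ 3 * x + 1))
  let p : K := (q ^ 2 - 1) * (q ^ 3 * x + q * x - q + 1) / ((q ^ 2 * x - 1) * (q ^ 3 * x + 1))
  let s : K := (q ^ 2 - 1) * x * (q ^ 3 * x - q ^ 2 * x + q ^ 2 + 1) /
    ((q ^ 2 * x - 1) * (q ^ 3 * x + 1))
  !![1, 0, 0, 0, 0, 0, 0, 0, 0;
     0, a, 0, d, 0, 0, 0, 0, 0;
     0, 0, b, 0, e, 0, p, 0, 0;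
     0, f, 0, a, 0, 0, 0, 0, 0;
     0, 0, g, 0, c, 0, e, 0, 0;
     0, 0, 0, 0, 0, a, 0, d, 0;
     0, 0, s, 0, g, 0, b, 0, 0;
     0, 0, 0, 0, 0, f, 0, a, 0;
     0, 0, 0, 0, 0, 0, 0, 0, 1]

set_option maxHeartbeats 2000000 in
/-- The vector `v = q^{−1/2} e₁⊗e₃ + e₂⊗e₂ + q^{1/2} e₃⊗e₁` lies in the kernel
of the Izergin–Korepin R-matrix at `x = −q³`: `R(−q³) v = 0`. Here `sq = q^{1/2}`
and indices `(i,j) ↦ 3(i−1)+j`, so `v` is supported at positions 3, 5, 7 (1-based). -/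
theorem IKR_kernel_vector (sq : ℂ) (hsq : sq ≠ 0) (h2 : (sq ^ 2) ^ 2 ≠ 1)
    (h5 : (sq ^ 2) ^ 5 ≠ -1) (h6 : (sq ^ 2) ^ 6 ≠ 1) :
    (IKR sq (-(sq ^ 2) ^ 3)).mulVec
      (fun r : Fin 9 =>
        if r = 2 then sq⁻¹ else if r = 4 then 1 else if r = 6 then sq else 0) = 0 := by
  have hA : (-1 - sq ^ 10 : ℂ) ≠ 0 := fun h => h5 (by linear_combination -h)
  have hB : (1 - sq ^ 12 : ℂ) ≠ 0 := fun h => h6 (by linear_combination -h)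
  have hA' : (-((sq ^ 2) ^ 2 * (sq ^ 2) ^ 3) - 1 : ℂ) ≠ 0 := fun h => hA (by linear_combination h)
  have hB' : (-((sq ^ 2) ^ 3 * (sq ^ 2) ^ 3) + 1 : ℂ) ≠ 0 := fun h => hB (by linear_combination h)
  have hv : (fun r : Fin 9 =>
      if r = 2 then sq⁻¹ else if r = 4 then (1:ℂ) else if r = 6 then sq else 0)
      = ![0, 0, sq⁻¹, 0, 1, 0, sq, 0, 0] := by
    funext r; fin_cases r <;> rfl
  rw [hv]
  funext r
  fin_cases r <;>
    simp only [IKR, Matrix.mulVec, Matrix.of_apply, Matrix.cons_val, Fin.reduceFinMk, Matrix.cons_dotProduct, Matrix.dotProduct_of_isEmpty,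
      Matrix.cons_val_zero, Matrix.cons_val_one, Matrix.head_cons, Matrix.tail_cons,
      Matrix.empty_val', Matrix.cons_val_fin_one, Matrix.cons_val_succ, Fin.isValue,
      Pi.zero_apply] <;>
    field_simp [hA', hB'] <;>
    ring_nf <;>
    rw [show (-1 - sq ^ 10 + sq ^ 12 + sq ^ 22 : ℂ) = (-1 - sq ^ 10) * (1 - sq ^ 12) by ring] <;>
    field_simp <;>
    ring
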